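/- Let V ≥ 0 with e^{2V} − 1 ≤ 1/2, μ > 0, D ≥ 0, and let m : ℝ³ → ℝ³ be a Lebesgue measure-preserving bijection such that for all y: e^{-V}|y| ≤ |m(±y)| ≤ e^{V}|y| and | |m(−y)| − |m(y)| | ≤ D min(1, μ|y|)|y|. Let f : ℝ³ → ℝ be a C² function with bounded first and second derivatives, and let x ∈ ℝ³. For ε > 0 set g_ε = ∫_{{y : |y| ≥ ε, |m(−y)| < ε}} K₀(y)(f(x−y) − f(x)) dy. Then there exists a constant C, depending only on F, V, D, μ, ‖∇f‖_{L^∞} and ‖∇²f‖_{L^∞}, such that |g_ε| ≤ C ε for all 0 < ε ≤ 1; in particular g_ε → 0 as ε → 0⁺, uniformly in x. -/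

import Mathlib

open MeasureTheory Filter
open scoped Real Topology

noncomputable section

/-- `|x|_{1/F}² = x₁² + x₂² + x₃²/F²`. -/
def normInvFsq (F : ℝ) (x : EuclideanSpace ℝ (Fin 3)) : ℝ :=
  x 0 ^ 2 + x 1 ^ 2 + x 2 ^ 2 / F ^ 2

/-- The kernel `K₀(y) = −(2/F²)(y₁² + y₂² − 3y₃²/F²)/|y|_{1/F}⁶`. -/
def K₀ (F : ℝ) (y : EuclideanSpace ℝ (Fin 3)) : ℝ :=
  -(2 / F ^ 2) * (y 0 ^ 2 + y 1 ^ 2 - 3 * y 2 ^ 2 / F ^ 2) / (normInvFsq F y) ^ 3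

local notation "E3" => EuclideanSpace ℝ (Fin 3)

lemma E3_norm_sq (y : E3) : ‖y‖ ^ 2 = y 0 ^ 2 + y 1 ^ 2 + y 2 ^ 2 := by
  have h : (0:ℝ) ≤ ∑ i, ‖y i‖ ^ 2 := Finset.sum_nonneg fun i _ => sq_nonneg _
  rw [EuclideanSpace.norm_eq, Real.sq_sqrt h, Fin.sum_univ_three]
  simp [Real.norm_eq_abs, sq_abs]

lemma K0_even (F : ℝ) (y : E3) : K₀ F (-y) = K₀ F y := by
  simp [K₀, normInvFsq]

lemma K0_measurable (F : ℝ) : Measurable (K₀ F) := by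
  unfold K₀ normInvFsq
  have h : ∀ i : Fin 3, Measurable fun y : E3 => y i := fun i => (measurable_pi_apply i).comp (WithLp.measurable_ofLp _ _)
  fun_prop

lemma K0_bound {F : ℝ} (hF0 : 0 < F) (hF1 : F ≤ 1) {y : E3} (hy : 0 < ‖y‖) :
    |K₀ F y| ≤ 6 / F ^ 2 / ‖y‖ ^ 4 := by
  have hF2 : 0 < F ^ 2 := by positivity
  have hF21 : F ^ 2 ≤ 1 := by nlinarith
  have hns : ‖y‖ ^ 2 = y 0 ^ 2 + y 1 ^ 2 + y 2 ^ 2 := E3_norm_sq y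
  have hQdef : normInvFsq F y = y 0 ^ 2 + y 1 ^ 2 + y 2 ^ 2 / F ^ 2 := rfl
  have hc : y 2 ^ 2 ≤ y 2 ^ 2 / F ^ 2 := by
    rw [le_div_iff₀ hF2]; nlinarith [sq_nonneg (y 2)]
  have hQge : ‖y‖ ^ 2 ≤ normInvFsq F y := by rw [hns, hQdef]; nlinarith
  have hQpos : 0 < normInvFsq F y := lt_of_lt_of_le (by positivity) hQge
  have hcF : 0 ≤ y 2 ^ 2 / F ^ 2 := by positivity
  have hnum : |y 0 ^ 2 + y 1 ^ 2 - 3 * y 2 ^ 2 / F ^ 2| ≤ 3 * normInvFsq F y := by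
    have h3 : 3 * y 2 ^ 2 / F ^ 2 = 3 * (y 2 ^ 2 / F ^ 2) := by ring
    rw [abs_le, hQdef, h3]
    constructor
    · nlinarith [sq_nonneg (y 0), sq_nonneg (y 1)]
    · nlinarith [sq_nonneg (y 0), sq_nonneg (y 1)]
  have key : |K₀ F y| ≤ 2 / F ^ 2 * (3 * normInvFsq F y) / (normInvFsq F y) ^ 3 := by
    rw [K₀, abs_div, abs_mul, abs_neg, abs_of_pos (by positivity : (0:ℝ) < 2 / F ^ 2),
      abs_of_pos (by positivity : (0:ℝ) < (normInvFsq F y) ^ 3)]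
    gcongr
  refine key.trans ?_
  have h1 : 2 / F ^ 2 * (3 * normInvFsq F y) / (normInvFsq F y) ^ 3
      = 6 / F ^ 2 / (normInvFsq F y) ^ 2 := by field_simp; ring
  rw [h1]
  have hy4 : (0:ℝ) < ‖y‖ ^ 4 := by positivity
  have h44 : ‖y‖ ^ 4 ≤ (normInvFsq F y) ^ 2 := by nlinarith [hQge, sq_nonneg ‖y‖]
  gcongr

lemma lip_of_fderiv {f : E3 → ℝ} {B₁ : ℝ} (hf : ContDiff ℝ 2 f)
    (hB : ∀ z, ‖fderiv ℝ f z‖ ≤ B₁) (a b : E3) : |f a - f b| ≤ B₁ * ‖a - b‖ := by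
  have := Convex.norm_image_sub_le_of_norm_fderiv_le
    (fun z _ => (hf.differentiable (by norm_num)).differentiableAt)
    (fun z _ => hB z) convex_univ (Set.mem_univ b) (Set.mem_univ a)
  simpa [Real.norm_eq_abs] using this

lemma fderiv_lip {f : E3 → ℝ} {B₂ : ℝ} (hf : ContDiff ℝ 2 f)
    (hB : ∀ z, ‖iteratedFDeriv ℝ 2 f z‖ ≤ B₂) (a b : E3) :
    ‖fderiv ℝ f a - fderiv ℝ f b‖ ≤ B₂ * ‖a - b‖ := by
  have hd : ContDiff ℝ 1 (fderiv ℝ f) := hf.fderiv_right (by norm_num)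
  have hbound : ∀ z : E3, ‖fderiv ℝ (fderiv ℝ f) z‖ ≤ B₂ := by
    intro z
    calc ‖fderiv ℝ (fderiv ℝ f) z‖
        = ‖iteratedFDeriv ℝ 0 (fderiv ℝ (fderiv ℝ f)) z‖ := by rw [norm_iteratedFDeriv_zero]
      _ = ‖iteratedFDeriv ℝ 1 (fderiv ℝ f) z‖ := norm_iteratedFDeriv_fderiv
      _ = ‖iteratedFDeriv ℝ 2 f z‖ := norm_iteratedFDeriv_fderiv
      _ ≤ B₂ := hB z
  exact Convex.norm_image_sub_le_of_norm_fderiv_le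
    (fun z _ => (hd.differentiable (by norm_num)).differentiableAt)
    (fun z _ => hbound z) convex_univ (Set.mem_univ b) (Set.mem_univ a)

lemma taylor2 {f : E3 → ℝ} {B₂ : ℝ} (hf : ContDiff ℝ 2 f)
    (hB : ∀ z, ‖iteratedFDeriv ℝ 2 f z‖ ≤ B₂) (x y : E3) :
    |f (x - y) + f (x + y) - 2 * f x| ≤ 2 * B₂ * ‖y‖ ^ 2 := by
  have hdiff : Differentiable ℝ f := hf.differentiable (by norm_num)
  set L := fderiv ℝ f x with hL
  have main : ∀ v : E3, |f (x + v) - f x - L v| ≤ B₂ * ‖v‖ ^ 2 := by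
    intro v
    set g : E3 → ℝ := fun z => f z - L (z - x) with hg
    have hgd : ∀ z : E3, DifferentiableAt ℝ g z := by
      intro z
      exact (hdiff z).sub ((L.differentiable.comp (differentiable_id.sub_const x)) z)
    have hgder : ∀ z : E3, fderiv ℝ g z = fderiv ℝ f z - L := by
      intro z
      have h1 : fderiv ℝ (fun z : E3 => L (z - x)) z = L := by
        have : (fun z : E3 => L (z - x)) = fun z => L z - L x := by
          funext w; rw [map_sub]
        rw [this]
        simp [fderiv_sub_const, L.fderiv]
      rw [hg]
      rw [fderiv_fun_sub (hdiff z)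
        (by fun_prop : DifferentiableAt ℝ (fun z : E3 => L (z - x)) z), h1]
    have hball : ∀ z ∈ Metric.closedBall x ‖v‖, ‖fderiv ℝ g z‖ ≤ B₂ * ‖v‖ := by
      intro z hz
      rw [hgder z, hL]
      calc ‖fderiv ℝ f z - fderiv ℝ f x‖ ≤ B₂ * ‖z - x‖ := fderiv_lip hf hB z x
        _ ≤ B₂ * ‖v‖ := by
            have hB0 : 0 ≤ B₂ := le_trans (norm_nonneg _) (hB x)
            have := mem_closedBall_iff_norm.mp hz
            exact mul_le_mul_of_nonneg_left this hB0
    have hmem1 : x ∈ Metric.closedBall x ‖v‖ := by simp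
    have hmem2 : x + v ∈ Metric.closedBall x ‖v‖ := by
      simp [dist_eq_norm]
    have := Convex.norm_image_sub_le_of_norm_fderiv_le
      (fun z _ => hgd z) hball (convex_closedBall x ‖v‖) hmem1 hmem2
    have heq : g (x + v) - g x = f (x + v) - f x - L v := by
      simp only [hg]
      have : x + v - x = v := by abel
      rw [this]
      ring_nf
      simp
    rw [heq] at this
    calc |f (x + v) - f x - L v| ≤ B₂ * ‖v‖ * ‖x + v - x‖ := by
          simpa [Real.norm_eq_abs] using this
      _ = B₂ * ‖v‖ ^ 2 := by rw [show x + v - x = v by abel]; ring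
  have h1 := main y
  have h2 := main (-y)
  have hsum : f (x - y) + f (x + y) - 2 * f x
      = (f (x + y) - f x - L y) + (f (x + (-y)) - f x - L (-y)) := by
    rw [map_neg]
    have : x + (-y) = x - y := by abel
    rw [this]; ring
  rw [hsum]
  calc |(f (x + y) - f x - L y) + (f (x + (-y)) - f x - L (-y))|
      ≤ |f (x + y) - f x - L y| + |f (x + (-y)) - f x - L (-y)| := abs_add_le _ _
    _ ≤ B₂ * ‖y‖ ^ 2 + B₂ * ‖(-y : E3)‖ ^ 2 := add_le_add h1 h2
    _ = 2 * B₂ * ‖y‖ ^ 2 := by rw [norm_neg]; ring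

def c3 : ℝ := (volume (Metric.ball (0 : EuclideanSpace ℝ (Fin 3)) 1)).toReal

lemma E3_ball_vol {r : ℝ} (hr : 0 ≤ r) :
    (volume (Metric.ball (0 : E3) r)).toReal = r ^ 3 * c3 := by
  rw [Measure.addHaar_ball _ _ hr, finrank_euclideanSpace_fin]
  rw [ENNReal.toReal_mul, ENNReal.toReal_ofReal (by positivity)]
  rfl

lemma shell_vol {ε ρ : ℝ} (hε : 0 ≤ ε) (h : ε ≤ ρ) :
    (volume {z : E3 | ε ≤ ‖z‖ ∧ ‖z‖ < ρ}).toReal ≤ (ρ ^ 3 - ε ^ 3) * c3 := by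
  have hsub : {z : E3 | ε ≤ ‖z‖ ∧ ‖z‖ < ρ} ⊆ Metric.ball 0 ρ \ Metric.ball 0 ε := by
    intro z hz
    exact ⟨by simpa [mem_ball_zero_iff] using hz.2,
      by simp [mem_ball_zero_iff, not_lt, hz.1]⟩
  have hfin : volume (Metric.ball (0:E3) ρ) < ⊤ := measure_ball_lt_top
  have hεfin : volume (Metric.ball (0:E3) ε) ≠ ⊤ :=
    (measure_ball_lt_top (x := (0:E3)) (r := ε)).ne
  have hdiff : volume (Metric.ball (0:E3) ρ \ Metric.ball 0 ε)
      = volume (Metric.ball (0:E3) ρ) - volume (Metric.ball (0:E3) ε) :=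
    measure_diff (Metric.ball_subset_ball h) measurableSet_ball.nullMeasurableSet hεfin
  calc (volume {z : E3 | ε ≤ ‖z‖ ∧ ‖z‖ < ρ}).toReal
      ≤ (volume (Metric.ball (0:E3) ρ \ Metric.ball 0 ε)).toReal := by
        apply ENNReal.toReal_mono
        · rw [hdiff]; exact (tsub_le_self.trans_lt hfin).ne
        · exact measure_mono hsub
    _ = (volume (Metric.ball (0:E3) ρ)).toReal - (volume (Metric.ball (0:E3) ε)).toReal := by
        rw [hdiff, ENNReal.toReal_sub_of_le (measure_mono (Metric.ball_subset_ball h)) hfin.ne]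
    _ = (ρ ^ 3 - ε ^ 3) * c3 := by
        rw [E3_ball_vol (hε.trans h), E3_ball_vol hε]; ring


set_option maxHeartbeats 2000000 in
/-- The discrepancy term
`g_ε = ∫_{{|y| ≥ ε, |m(−y)| < ε}} K₀(y)(f(x−y) − f(x)) dy` satisfies `|g_ε| ≤ C ε` for
`0 < ε ≤ 1`, with `C` depending only on `F`, `V`, `D`, `μ` and the bounds `B₁, B₂` on
`‖∇f‖_{L^∞}, ‖∇²f‖_{L^∞}`; in particular `g_ε → 0` as `ε → 0⁺`, uniformly in `x`. -/
theorem discrepancy_term_estimate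
    (F : ℝ) (hF : F ∈ Set.Ioc (0 : ℝ) 1)
    (V μ D B₁ B₂ : ℝ) (hV : 0 ≤ V) (hV2 : Real.exp (2 * V) - 1 ≤ 1 / 2)
    (hμ : 0 < μ) (hD : 0 ≤ D) (hB₁ : 0 ≤ B₁) (hB₂ : 0 ≤ B₂) :
    ∃ C > (0 : ℝ),
      ∀ m : EuclideanSpace ℝ (Fin 3) → EuclideanSpace ℝ (Fin 3),
        Function.Bijective m →
        MeasurePreserving m (volume : Measure (EuclideanSpace ℝ (Fin 3))) volume →
        (∀ y : EuclideanSpace ℝ (Fin 3),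
          (Real.exp (-V) * ‖y‖ ≤ ‖m y‖ ∧ ‖m y‖ ≤ Real.exp V * ‖y‖) ∧
          (Real.exp (-V) * ‖y‖ ≤ ‖m (-y)‖ ∧ ‖m (-y)‖ ≤ Real.exp V * ‖y‖)) →
        (∀ y : EuclideanSpace ℝ (Fin 3),
          |‖m (-y)‖ - ‖m y‖| ≤ D * min 1 (μ * ‖y‖) * ‖y‖) →
      ∀ f : EuclideanSpace ℝ (Fin 3) → ℝ,
        ContDiff ℝ 2 f →
        (∀ x, ‖fderiv ℝ f x‖ ≤ B₁) →
        (∀ x, ‖iteratedFDeriv ℝ 2 f x‖ ≤ B₂) →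
      ∀ x : EuclideanSpace ℝ (Fin 3),
        (∀ ε ∈ Set.Ioc (0 : ℝ) 1,
          |∫ y in {y : EuclideanSpace ℝ (Fin 3) | ε ≤ ‖y‖ ∧ ‖m (-y)‖ < ε},
              K₀ F y * (f (x - y) - f x)| ≤ C * ε) ∧
        Tendsto (fun ε : ℝ =>
            ∫ y in {y : EuclideanSpace ℝ (Fin 3) | ε ≤ ‖y‖ ∧ ‖m (-y)‖ < ε},
              K₀ F y * (f (x - y) - f x))
          (𝓝[>] 0) (𝓝 0) := by
  obtain ⟨hF0, hF1⟩ := hF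
  have heV1 : (1:ℝ) ≤ Real.exp V := Real.one_le_exp hV
  have heV0 : (0:ℝ) < Real.exp V := Real.exp_pos V
  set eV := Real.exp V with heVdef
  have hc30 : (0:ℝ) ≤ c3 := ENNReal.toReal_nonneg
  have hCK0 : (0:ℝ) < 6 / F ^ 2 := by positivity
  set CK := 6 / F ^ 2 with hCKdef
  set Kc := D * μ * eV ^ 2 with hKcdef
  have hKc0 : 0 ≤ Kc := by
    rw [hKcdef]; exact mul_nonneg (mul_nonneg hD hμ.le) (by positivity)
  have hT1 : (0:ℝ) ≤ 2 * B₂ * eV ^ 5 := mul_nonneg (by linarith) (by positivity)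
  have hT2 : (0:ℝ) ≤ 6 * B₁ * eV * (1 + Kc) ^ 2 * Kc :=
    mul_nonneg (mul_nonneg (mul_nonneg (by linarith) heV0.le) (by positivity)) hKc0
  set C := 1 + CK * c3 * (2 * B₂ * eV ^ 5 + 6 * B₁ * eV * (1 + Kc) ^ 2 * Kc) with hCdef
  have hCrest : 0 ≤ CK * c3 * (2 * B₂ * eV ^ 5 + 6 * B₁ * eV * (1 + Kc) ^ 2 * Kc) :=
    mul_nonneg (mul_nonneg hCK0.le hc30) (add_nonneg hT1 hT2)
  have hC0 : 0 < C := by rw [hCdef]; linarith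
  refine ⟨C, hC0, ?_⟩
  intro m hmbij hmp hmV hmD f hf hf1 hf2 x
  have hB1f : ∀ a b : E3, |f a - f b| ≤ B₁ * ‖a - b‖ := lip_of_fderiv hf hf1
  have hmmeas : Measurable m := hmp.measurable
  have key : ∀ ε ∈ Set.Ioc (0:ℝ) 1,
      |∫ y in {y : E3 | ε ≤ ‖y‖ ∧ ‖m (-y)‖ < ε},
        K₀ F y * (f (x - y) - f x)| ≤ C * ε := by
    rintro ε ⟨hε0, hε1⟩
    set A := {y : E3 | ε ≤ ‖y‖ ∧ ‖m (-y)‖ < ε} with hAdef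
    set B := {y : E3 | ε ≤ ‖y‖ ∧ ‖m y‖ < ε} with hBdef
    have hAm : MeasurableSet A :=
      MeasurableSet.inter (measurableSet_le measurable_const measurable_norm)
        (measurableSet_lt ((hmmeas.comp measurable_neg).norm) measurable_const)
    have hBm : MeasurableSet B :=
      MeasurableSet.inter (measurableSet_le measurable_const measurable_norm)
        (measurableSet_lt (hmmeas.norm) measurable_const)
    have hexpand : ∀ y : E3, Real.exp (-V) * ‖y‖ < ε → ‖y‖ < eV * ε := by
      intro y hlt
      have h3 : ‖y‖ = eV * (Real.exp (-V) * ‖y‖) := by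
        rw [heVdef, ← mul_assoc, ← Real.exp_add]; simp
      rw [h3]
      exact (mul_lt_mul_iff_right₀ heV0).mpr hlt
    have hAy : ∀ y ∈ A, ε ≤ ‖y‖ ∧ ‖y‖ < eV * ε := by
      rintro y ⟨h1, h2⟩
      exact ⟨h1, hexpand y (lt_of_le_of_lt (hmV y).2.1 h2)⟩
    have hBy : ∀ y ∈ B, ε ≤ ‖y‖ ∧ ‖y‖ < eV * ε := by
      rintro y ⟨h1, h2⟩
      exact ⟨h1, hexpand y (lt_of_le_of_lt (hmV y).1.1 h2)⟩
    have hKb : ∀ y : E3, ε ≤ ‖y‖ → |K₀ F y| ≤ CK / ε ^ 4 := by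
      intro y hy
      have h0 : 0 < ‖y‖ := lt_of_lt_of_le hε0 hy
      refine (K0_bound hF0 hF1 h0).trans ?_
      rw [hCKdef]
      have h4 : ε ^ 4 ≤ ‖y‖ ^ 4 := pow_le_pow_left₀ hε0.le hy 4
      gcongr
    set Mφ := CK / ε ^ 4 * (B₁ * (eV * ε)) with hMφdef
    have hMφ0 : 0 ≤ Mφ := by
      rw [hMφdef]
      exact mul_nonneg (div_nonneg hCK0.le (by positivity))
        (mul_nonneg hB₁ (by positivity))
    have hφb : ∀ y ∈ A, |K₀ F y * (f (x - y) - f x)| ≤ Mφ := by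
      intro y hy
      obtain ⟨h1, h2⟩ := hAy y hy
      rw [abs_mul, hMφdef]
      have hfb : |f (x - y) - f x| ≤ B₁ * (eV * ε) := by
        have hx1 := hB1f (x - y) x
        rw [show x - y - x = -y by abel, norm_neg] at hx1
        exact hx1.trans (mul_le_mul_of_nonneg_left h2.le hB₁)
      exact mul_le_mul (hKb y h1) hfb (abs_nonneg _)
        (div_nonneg hCK0.le (by positivity))
    have hψb : ∀ y ∈ B, |K₀ F y * (f (x + y) - f x)| ≤ Mφ := by
      intro y hy
      obtain ⟨h1, h2⟩ := hBy y hy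
      rw [abs_mul, hMφdef]
      have hfb : |f (x + y) - f x| ≤ B₁ * (eV * ε) := by
        have hx1 := hB1f (x + y) x
        rw [show x + y - x = y by abel] at hx1
        exact hx1.trans (mul_le_mul_of_nonneg_left h2.le hB₁)
      exact mul_le_mul (hKb y h1) hfb (abs_nonneg _)
        (div_nonneg hCK0.le (by positivity))
    have hAsub : A ⊆ Metric.ball 0 (eV * ε) := fun y hy =>
      mem_ball_zero_iff.mpr (hAy y hy).2
    have hBsub : B ⊆ Metric.ball 0 (eV * ε) := fun y hy =>
      mem_ball_zero_iff.mpr (hBy y hy).2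
    have hAfin : volume A < ⊤ := (measure_mono hAsub).trans_lt measure_ball_lt_top
    have hBfin : volume B < ⊤ := (measure_mono hBsub).trans_lt measure_ball_lt_top
    have hmeasφ : Measurable fun y : E3 => K₀ F y * (f (x - y) - f x) :=
      (K0_measurable F).mul
        (((hf.continuous).comp (continuous_const.sub continuous_id)).sub
          continuous_const).measurable
    have hmeasψ : Measurable fun y : E3 => K₀ F y * (f (x + y) - f x) :=
      (K0_measurable F).mul
        (((hf.continuous).comp (continuous_const.add continuous_id)).sub
          continuous_const).measurable
    have hφint : IntegrableOn (fun y : E3 => K₀ F y * (f (x - y) - f x)) A volume :=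
      ⟨hmeasφ.aestronglyMeasurable.restrict,
        HasFiniteIntegral.restrict_of_bounded (C := Mφ) hAfin
          (by filter_upwards [ae_restrict_mem hAm] with y hy
              simpa only [Real.norm_eq_abs] using hφb y hy)⟩
    have hψint : IntegrableOn (fun y : E3 => K₀ F y * (f (x + y) - f x)) B volume :=
      ⟨hmeasψ.aestronglyMeasurable.restrict,
        HasFiniteIntegral.restrict_of_bounded (C := Mφ) hBfin
          (by filter_upwards [ae_restrict_mem hBm] with y hy
              simpa only [Real.norm_eq_abs] using hψb y hy)⟩
    have hneg : MeasurePreserving (fun y : E3 => -y) volume volume :=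
      Measure.measurePreserving_neg _
    have hnegemb : MeasurableEmbedding (fun y : E3 => -y) :=
      (Homeomorph.neg E3).measurableEmbedding
    have hAB : A = (fun y : E3 => -y) '' B := by
      ext z
      simp only [hAdef, hBdef, Set.mem_image, Set.mem_setOf_eq]
      constructor
      · rintro ⟨h1, h2⟩
        exact ⟨-z, ⟨by simpa using h1, h2⟩, by simp⟩
      · rintro ⟨y, ⟨h1, h2⟩, rfl⟩
        exact ⟨by simpa using h1, by simpa using h2⟩
    have hchg : (∫ y in A, K₀ F y * (f (x - y) - f x))
        = ∫ y in B, K₀ F y * (f (x + y) - f x) := by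
      rw [hAB, MeasurePreserving.setIntegral_image_emb hneg hnegemb]
      refine integral_congr_ae (Eventually.of_forall fun y => ?_)
      show K₀ F (-y) * (f (x - -y) - f x) = K₀ F y * (f (x + y) - f x)
      rw [K0_even, sub_neg_eq_add]
    have hsplit1 : (∫ y in A ∩ B, K₀ F y * (f (x - y) - f x))
        + (∫ y in A \ B, K₀ F y * (f (x - y) - f x))
        = ∫ y in A, K₀ F y * (f (x - y) - f x) :=
      integral_inter_add_diff hBm hφint
    have hsplit2 : (∫ y in B ∩ A, K₀ F y * (f (x + y) - f x))
        + (∫ y in B \ A, K₀ F y * (f (x + y) - f x))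
        = ∫ y in B, K₀ F y * (f (x + y) - f x) :=
      integral_inter_add_diff hAm hψint
    rw [Set.inter_comm] at hsplit2
    have haddint : (∫ y in A ∩ B,
          (K₀ F y * (f (x - y) - f x) + K₀ F y * (f (x + y) - f x)))
        = (∫ y in A ∩ B, K₀ F y * (f (x - y) - f x))
          + ∫ y in A ∩ B, K₀ F y * (f (x + y) - f x) :=
      integral_add (hφint.mono_set Set.inter_subset_left)
        (hψint.mono_set Set.inter_subset_right)
    have htwo : 2 * (∫ y in A, K₀ F y * (f (x - y) - f x))
        = (∫ y in A ∩ B,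
            (K₀ F y * (f (x - y) - f x) + K₀ F y * (f (x + y) - f x)))
          + (∫ y in A \ B, K₀ F y * (f (x - y) - f x))
          + ∫ y in B \ A, K₀ F y * (f (x + y) - f x) := by
      linarith [hsplit1, hsplit2, hchg, haddint]
    -- bound on the symmetric part
    have hI1 : |∫ y in A ∩ B,
          (K₀ F y * (f (x - y) - f x) + K₀ F y * (f (x + y) - f x))|
        ≤ (CK / ε ^ 4 * (2 * B₂ * (eV * ε) ^ 2)) * ((eV * ε) ^ 3 * c3) := by
      have hABfin : volume (A ∩ B) < ⊤ :=
        (measure_mono Set.inter_subset_left).trans_lt hAfin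
      have hb : ∀ y ∈ A ∩ B,
          ‖K₀ F y * (f (x - y) - f x) + K₀ F y * (f (x + y) - f x)‖
            ≤ CK / ε ^ 4 * (2 * B₂ * (eV * ε) ^ 2) := by
        intro y hy
        obtain ⟨h1, h2⟩ := hAy y hy.1
        have hsum : K₀ F y * (f (x - y) - f x) + K₀ F y * (f (x + y) - f x)
            = K₀ F y * (f (x - y) + f (x + y) - 2 * f x) := by ring
        rw [Real.norm_eq_abs, hsum, abs_mul]
        have ht := taylor2 hf hf2 x y
        have h2' : ‖y‖ ^ 2 ≤ (eV * ε) ^ 2 := pow_le_pow_left₀ (norm_nonneg y) h2.le 2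
        have ht2 : |f (x - y) + f (x + y) - 2 * f x| ≤ 2 * B₂ * (eV * ε) ^ 2 :=
          ht.trans (mul_le_mul_of_nonneg_left h2' (by linarith))
        exact mul_le_mul (hKb y h1) ht2 (abs_nonneg _)
          (div_nonneg hCK0.le (by positivity))
      have hn := norm_setIntegral_le_of_norm_le_const hABfin hb
      have hv : (volume (A ∩ B)).toReal ≤ (eV * ε) ^ 3 * c3 := by
        have hmono : (volume (A ∩ B)).toReal
            ≤ (volume (Metric.ball (0:E3) (eV * ε))).toReal :=
          ENNReal.toReal_mono measure_ball_lt_top.ne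
            (measure_mono (Set.inter_subset_left.trans hAsub))
        rwa [E3_ball_vol (by positivity)] at hmono
      calc |∫ y in A ∩ B,
            (K₀ F y * (f (x - y) - f x) + K₀ F y * (f (x + y) - f x))|
          ≤ CK / ε ^ 4 * (2 * B₂ * (eV * ε) ^ 2) * (volume (A ∩ B)).toReal := by
            simpa [Real.norm_eq_abs, measureReal_def] using hn
        _ ≤ (CK / ε ^ 4 * (2 * B₂ * (eV * ε) ^ 2)) * ((eV * ε) ^ 3 * c3) := by
            apply mul_le_mul_of_nonneg_left hv
            exact mul_nonneg (div_nonneg hCK0.le (by positivity))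
              (mul_nonneg (by linarith) (by positivity))
    -- shell estimates
    set δ := Kc * ε ^ 2 with hδdef
    have hδ0 : 0 ≤ δ := mul_nonneg hKc0 (by positivity)
    set S := {z : E3 | ε ≤ ‖z‖ ∧ ‖z‖ < ε + δ} with hSdef
    have hSm : MeasurableSet S :=
      MeasurableSet.inter (measurableSet_le measurable_const measurable_norm)
        (measurableSet_lt measurable_norm measurable_const)
    have hSfin : volume S ≠ ⊤ := by
      refine ((measure_mono (fun z hz => ?_)).trans_lt
        (measure_ball_lt_top (x := (0:E3)) (r := ε + δ))).ne
      exact mem_ball_zero_iff.mpr hz.2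
    have hSvol : (volume S).toReal ≤ ((ε + δ) ^ 3 - ε ^ 3) * c3 :=
      shell_vol hε0.le (by linarith)
    have hpow : (ε + δ) ^ 3 - ε ^ 3 ≤ 3 * (1 + Kc) ^ 2 * Kc * ε ^ 4 := by
      rw [hδdef]
      have h5 : ε ^ 5 ≤ ε ^ 4 := pow_le_pow_of_le_one hε0.le hε1 (by norm_num)
      have h6 : ε ^ 6 ≤ ε ^ 4 := pow_le_pow_of_le_one hε0.le hε1 (by norm_num)
      have e1 : Kc ^ 2 * ε ^ 5 ≤ Kc ^ 2 * ε ^ 4 :=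
        mul_le_mul_of_nonneg_left h5 (sq_nonneg Kc)
      have e2 : Kc ^ 3 * ε ^ 6 ≤ Kc ^ 3 * ε ^ 4 :=
        mul_le_mul_of_nonneg_left h6 (pow_nonneg hKc0 3)
      have e3 : 0 ≤ Kc ^ 2 * ε ^ 4 := mul_nonneg (sq_nonneg Kc) (pow_nonneg hε0.le 4)
      have e4 : 0 ≤ Kc ^ 3 * ε ^ 4 := mul_nonneg (pow_nonneg hKc0 3) (pow_nonneg hε0.le 4)
      have expand : (ε + Kc * ε ^ 2) ^ 3 - ε ^ 3
          = 3 * Kc * ε ^ 4 + 3 * (Kc ^ 2 * ε ^ 5) + Kc ^ 3 * ε ^ 6 := by ring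
      have rhs : 3 * (1 + Kc) ^ 2 * Kc * ε ^ 4
          = 3 * Kc * ε ^ 4 + 6 * (Kc ^ 2 * ε ^ 4) + 3 * (Kc ^ 3 * ε ^ 4) := by ring
      rw [expand, rhs]
      linarith
    have hSvol2 : (volume S).toReal ≤ 3 * (1 + Kc) ^ 2 * Kc * ε ^ 4 * c3 :=
      hSvol.trans (mul_le_mul_of_nonneg_right hpow hc30)
    -- the discrepancy estimate
    have hminb : ∀ y : E3, ‖y‖ < eV * ε → D * min 1 (μ * ‖y‖) * ‖y‖ ≤ δ := by
      intro y h2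
      have hmin : min 1 (μ * ‖y‖) ≤ μ * ‖y‖ := min_le_right _ _
      have hyy : ‖y‖ ^ 2 ≤ (eV * ε) ^ 2 := pow_le_pow_left₀ (norm_nonneg y) h2.le 2
      calc D * min 1 (μ * ‖y‖) * ‖y‖
          ≤ D * (μ * ‖y‖) * ‖y‖ :=
            mul_le_mul_of_nonneg_right (mul_le_mul_of_nonneg_left hmin hD) (norm_nonneg y)
        _ = D * μ * ‖y‖ ^ 2 := by ring
        _ ≤ D * μ * (eV * ε) ^ 2 :=
            mul_le_mul_of_nonneg_left hyy (mul_nonneg hD hμ.le)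
        _ = δ := by rw [hδdef, hKcdef]; ring
    have hAdiff : A \ B ⊆ m ⁻¹' S := by
      rintro y ⟨hyA, hyB⟩
      obtain ⟨h1, h2⟩ := hAy y hyA
      have hge : ε ≤ ‖m y‖ := by
        by_contra hlt
        exact hyB ⟨h1, lt_of_not_ge hlt⟩
      refine ⟨hge, ?_⟩
      have hd := abs_le.mp (hmD y)
      have h5 : ‖m y‖ ≤ ‖m (-y)‖ + D * min 1 (μ * ‖y‖) * ‖y‖ := by linarith [hd.1]
      have hmy : ‖m (-y)‖ < ε := hyA.2
      have := hminb y h2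
      show ‖m y‖ < ε + δ
      linarith
    have hBdiff : B \ A ⊆ (fun y : E3 => -y) ⁻¹' (m ⁻¹' S) := by
      rintro y ⟨hyB, hyA⟩
      obtain ⟨h1, h2⟩ := hBy y hyB
      have hge : ε ≤ ‖m (-y)‖ := by
        by_contra hlt
        exact hyA ⟨h1, lt_of_not_ge hlt⟩
      refine ⟨hge, ?_⟩
      have hd := abs_le.mp (hmD y)
      have h5 : ‖m (-y)‖ ≤ ‖m y‖ + D * min 1 (μ * ‖y‖) * ‖y‖ := by linarith [hd.2]
      have hmy : ‖m y‖ < ε := hyB.2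
      have := hminb y h2
      show ‖m (-y)‖ < ε + δ
      linarith
    have hvolAB : (volume (A \ B)).toReal ≤ 3 * (1 + Kc) ^ 2 * Kc * ε ^ 4 * c3 := by
      refine le_trans (ENNReal.toReal_mono ?_ ?_) hSvol2
      · exact hSfin
      · calc volume (A \ B) ≤ volume (m ⁻¹' S) := measure_mono hAdiff
          _ = volume S := hmp.measure_preimage hSm.nullMeasurableSet
    have hvolBA : (volume (B \ A)).toReal ≤ 3 * (1 + Kc) ^ 2 * Kc * ε ^ 4 * c3 := by
      refine le_trans (ENNReal.toReal_mono ?_ ?_) hSvol2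
      · exact hSfin
      · calc volume (B \ A)
            ≤ volume ((fun y : E3 => -y) ⁻¹' (m ⁻¹' S)) := measure_mono hBdiff
          _ = volume (m ⁻¹' S) :=
              hneg.measure_preimage (hmmeas hSm).nullMeasurableSet
          _ = volume S := hmp.measure_preimage hSm.nullMeasurableSet
    have hI2 : |∫ y in A \ B, K₀ F y * (f (x - y) - f x)|
        ≤ Mφ * (3 * (1 + Kc) ^ 2 * Kc * ε ^ 4 * c3) := by
      have hfin : volume (A \ B) < ⊤ :=
        (measure_mono Set.diff_subset).trans_lt hAfin
      have hn := norm_setIntegral_le_of_norm_le_const (f := fun y => K₀ F y * (f (x - y) - f x)) hfin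
        (fun y hy => by simpa only [Real.norm_eq_abs] using hφb y hy.1)
      calc |∫ y in A \ B, K₀ F y * (f (x - y) - f x)|
          ≤ Mφ * (volume (A \ B)).toReal := by simpa [Real.norm_eq_abs, measureReal_def] using hn
        _ ≤ Mφ * (3 * (1 + Kc) ^ 2 * Kc * ε ^ 4 * c3) :=
            mul_le_mul_of_nonneg_left hvolAB hMφ0
    have hI3 : |∫ y in B \ A, K₀ F y * (f (x + y) - f x)|
        ≤ Mφ * (3 * (1 + Kc) ^ 2 * Kc * ε ^ 4 * c3) := by
      have hfin : volume (B \ A) < ⊤ :=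
        (measure_mono Set.diff_subset).trans_lt hBfin
      have hn := norm_setIntegral_le_of_norm_le_const (f := fun y => K₀ F y * (f (x + y) - f x)) hfin
        (fun y hy => by simpa only [Real.norm_eq_abs] using hψb y hy.1)
      calc |∫ y in B \ A, K₀ F y * (f (x + y) - f x)|
          ≤ Mφ * (volume (B \ A)).toReal := by simpa [Real.norm_eq_abs, measureReal_def] using hn
        _ ≤ Mφ * (3 * (1 + Kc) ^ 2 * Kc * ε ^ 4 * c3) :=
            mul_le_mul_of_nonneg_left hvolBA hMφ0
    -- combine
    have hval1 : CK / ε ^ 4 * (2 * B₂ * (eV * ε) ^ 2) * ((eV * ε) ^ 3 * c3)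
        = 2 * CK * B₂ * eV ^ 5 * c3 * ε := by
      field_simp
    have hval2 : Mφ * (3 * (1 + Kc) ^ 2 * Kc * ε ^ 4 * c3)
        = 3 * CK * B₁ * eV * (1 + Kc) ^ 2 * Kc * c3 * ε := by
      rw [hMφdef]
      field_simp
    have habs3 : |(∫ y in A ∩ B,
          (K₀ F y * (f (x - y) - f x) + K₀ F y * (f (x + y) - f x)))
        + (∫ y in A \ B, K₀ F y * (f (x - y) - f x))
        + ∫ y in B \ A, K₀ F y * (f (x + y) - f x)|
        ≤ 2 * CK * B₂ * eV ^ 5 * c3 * ε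
          + 3 * CK * B₁ * eV * (1 + Kc) ^ 2 * Kc * c3 * ε
          + 3 * CK * B₁ * eV * (1 + Kc) ^ 2 * Kc * c3 * ε := by
      rw [← hval1, ← hval2]
      calc |(∫ y in A ∩ B,
            (K₀ F y * (f (x - y) - f x) + K₀ F y * (f (x + y) - f x)))
          + (∫ y in A \ B, K₀ F y * (f (x - y) - f x))
          + ∫ y in B \ A, K₀ F y * (f (x + y) - f x)|
          ≤ |(∫ y in A ∩ B,
              (K₀ F y * (f (x - y) - f x) + K₀ F y * (f (x + y) - f x)))
            + (∫ y in A \ B, K₀ F y * (f (x - y) - f x))|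
            + |∫ y in B \ A, K₀ F y * (f (x + y) - f x)| := abs_add_le _ _
        _ ≤ |∫ y in A ∩ B,
              (K₀ F y * (f (x - y) - f x) + K₀ F y * (f (x + y) - f x))|
            + |∫ y in A \ B, K₀ F y * (f (x - y) - f x)|
            + |∫ y in B \ A, K₀ F y * (f (x + y) - f x)| :=
            add_le_add_left (abs_add_le _ _) _
        _ ≤ _ := add_le_add (add_le_add hI1 hI2) hI3
    have h2abs : 2 * |∫ y in A, K₀ F y * (f (x - y) - f x)|
        ≤ 2 * CK * B₂ * eV ^ 5 * c3 * ε
          + 3 * CK * B₁ * eV * (1 + Kc) ^ 2 * Kc * c3 * ε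
          + 3 * CK * B₁ * eV * (1 + Kc) ^ 2 * Kc * c3 * ε := by
      have : 2 * |∫ y in A, K₀ F y * (f (x - y) - f x)|
          = |2 * ∫ y in A, K₀ F y * (f (x - y) - f x)| := by
        rw [abs_mul]; norm_num
      rw [this, htwo]
      exact habs3
    have hsumval : 2 * CK * B₂ * eV ^ 5 * c3 * ε
          + 3 * CK * B₁ * eV * (1 + Kc) ^ 2 * Kc * c3 * ε
          + 3 * CK * B₁ * eV * (1 + Kc) ^ 2 * Kc * c3 * ε = (C - 1) * ε := by
      rw [hCdef]; ring
    have hCε : (C - 1) * ε ≤ 2 * C * ε := by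
      apply mul_le_mul_of_nonneg_right _ hε0.le
      linarith
    linarith [h2abs, hsumval.le, hCε]
  refine ⟨key, ?_⟩
  have h1 : ∀ᶠ ε in 𝓝[>] (0:ℝ),
      ‖∫ y in {y : E3 | ε ≤ ‖y‖ ∧ ‖m (-y)‖ < ε}, K₀ F y * (f (x - y) - f x)‖
        ≤ C * ε := by
    filter_upwards [Ioc_mem_nhdsGT_of_mem
      (by norm_num : (0:ℝ) ∈ Set.Ico (0:ℝ) 1)] with ε hε
    simpa only [Real.norm_eq_abs] using key ε hε
  have h2 : Tendsto (fun ε : ℝ => C * ε) (𝓝[>] (0:ℝ)) (𝓝 0) := by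
    have h : Tendsto (fun ε : ℝ => C * ε) (𝓝 (0:ℝ)) (𝓝 (C * 0)) :=
      (continuous_const.mul continuous_id).tendsto 0
    have h2' : Tendsto (fun ε : ℝ => C * ε) (𝓝[>] 0) (𝓝 (C * 0)) :=
      h.mono_left nhdsWithin_le_nhds
    simpa using h2'
  exact squeeze_zero_norm' h1 h2
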